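/- For any proper function h : ℝⁿ → ℝ ∪ {+∞}, any x̄ ∈ dom h, and any β, γ > 0, if ξ satisfies max{h(y), h(x̄)} ≥ h(x̄) + (λ/β)⟨ξ, y − x̄⟩ + (λ/2)(γ − λ/β − λγ)‖y − x̄‖² for all y ∈ ℝⁿ and all λ ∈ [0,1], then ξ belongs to the Greenberg–Pierskalla subdifferential of h at x̄, i.e., ⟨ξ, y − x̄⟩ ≥ 0 implies h(y) ≥ h(x̄). -/

import Mathlib

open RealInnerProductSpace Set Filter Topology

theorem strong_subdifferential_subset_greenberg_pierskalla
    {E : Type*} [NormedAddCommGroup E] [InnerProductSpace ℝ E]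
    (h : E → EReal) (hproper : ∀ x, h x ≠ ⊥)
    (xb : E) (hdom : h xb ≠ ⊤)
    (β γ : ℝ) (hβ : 0 < β) (hγ : 0 < γ)
    (ξ : E)
    (hξ : ∀ y : E, ∀ l ∈ Icc (0:ℝ) 1,
      h xb + (((l / β) * ⟪ξ, y - xb⟫
        + (l / 2) * (γ - l / β - l * γ) * ‖y - xb‖ ^ 2 : ℝ) : EReal)
        ≤ max (h y) (h xb)) :
    ∀ y : E, 0 ≤ ⟪ξ, y - xb⟫ → h xb ≤ h y := by
  intro y hy
  by_contra hlt
  push_neg at hlt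
  have hne : y ≠ xb := by
    rintro rfl
    exact absurd hlt (lt_irrefl _)
  have hnorm : (0:ℝ) < ‖y - xb‖ ^ 2 :=
    pow_pos (norm_pos_iff.mpr (sub_ne_zero.mpr hne)) 2
  have hden : (0:ℝ) < 1 + β * γ := by positivity
  have hl0 : 0 < (β * γ / (1 + β * γ)) / 2 := by positivity
  have hl1 : (β * γ / (1 + β * γ)) / 2 ≤ 1 := by
    have : β * γ / (1 + β * γ) < 1 := by
      rw [div_lt_one hden]; nlinarith
    linarith
  set l : ℝ := (β * γ / (1 + β * γ)) / 2 with hl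
  have hlsmall : l * (1 + β * γ) < β * γ := by
    have h2 : l * (1 + β * γ) = β * γ / 2 := by
      rw [hl]; field_simp
    rw [h2]; nlinarith
  have hcoef : 0 < γ - l / β - l * γ := by
    have : l / β + l * γ < γ := by
      rw [div_add' _ _ _ (ne_of_gt hβ), div_lt_iff₀ hβ]
      nlinarith
    linarith
  have hcpos : 0 < (l / β) * ⟪ξ, y - xb⟫
      + (l / 2) * (γ - l / β - l * γ) * ‖y - xb‖ ^ 2 := by
    have h1 : 0 ≤ (l / β) * ⟪ξ, y - xb⟫ := by positivity
    have h2 : 0 < (l / 2) * (γ - l / β - l * γ) * ‖y - xb‖ ^ 2 := by positivity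
    linarith
  have key := hξ y l ⟨le_of_lt hl0, hl1⟩
  have hmax : max (h y) (h xb) = h xb := max_eq_right (le_of_lt hlt)
  rw [hmax] at key
  lift h xb to ℝ using ⟨hdom, hproper xb⟩ with r hr
  rw [← EReal.coe_add, EReal.coe_le_coe_iff] at key
  linarith
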